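/- arXiv:1406.1972 — 4 statements merged into one kernel-verified Lean document; each statement's English description precedes it below -/
import Mathlib

section
/- Let P(𝒞,z) = Σ_{(i,j)∈S(P)} α_{i,j} 𝒞^i z^j ∈ ℂ[𝒞,z] and set M(P) = min_{(i,j)∈S(P)} (i−j). If Σ_{i : (i, i−M(P))∈S(P)} α_{i, i−M(P)} = 0 and Σ_{i : (i, i−M(P))∈S(P)} i·α_{i, i−M(P)} ≠ 0, then there exists exactly one probability branch of P at ∞. -/
open Finset

/-- The variable `w` in the field of formal Laurent series `ℂ((w))`. -/
noncomputable def laurentVar : LaurentSeries ℂ := HahnSeries.single 1 1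

/-- A probability branch at `∞` of the bivariate polynomial
`P(𝒞,z) = ∑_{(i,j) ∈ supp α} α (i,j) 𝒞^i z^j` (encoded by its coefficient finsupp `α`):
a formal power series `f(w) = w + ∑_{l ≥ 2} a_l w^l` such that substituting `𝒞 = f(w)`
and `z = w⁻¹` into `P` yields `0` in `ℂ((w))`. -/
def IsProbabilityBranch (α : (ℕ × ℕ) →₀ ℂ) (f : PowerSeries ℂ) : Prop :=
  PowerSeries.coeff 0 f = 0 ∧ PowerSeries.coeff 1 f = 1 ∧
    ∑ p ∈ α.support,
      (α p) • ((HahnSeries.ofPowerSeries ℤ ℂ f) ^ p.1 * (laurentVar⁻¹) ^ p.2) = 0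

open Polynomial PowerSeries

noncomputable section

private lemma phi_eval (P : Polynomial (PowerSeries ℂ)) (a : PowerSeries ℂ) :
    PowerSeries.constantCoeff (P.eval a) =
      (P.map (PowerSeries.constantCoeff)).eval (PowerSeries.constantCoeff a) := by
  rw [Polynomial.eval_map, Polynomial.eval₂_at_apply]

private lemma hensel (Q : Polynomial (PowerSeries ℂ))
    (h0 : PowerSeries.constantCoeff (Q.eval 1) = 0)
    (h1 : PowerSeries.constantCoeff (Q.derivative.eval 1) ≠ 0) :
    ∃! u : PowerSeries ℂ, PowerSeries.constantCoeff u = 1 ∧ Q.eval u = 0 := by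
  set φ := PowerSeries.constantCoeff (R := ℂ) with hφ
  -- the derivative has nonzero constant coefficient at any point with φ a = 1
  have hder : ∀ a : PowerSeries ℂ, φ a = 1 → φ (Q.derivative.eval a) ≠ 0 := by
    intro a ha
    rw [phi_eval, ha]
    rw [phi_eval] at h1
    simpa using h1
  -- Newton iteration
  let u : ℕ → PowerSeries ℂ := fun k =>
    Nat.rec 1 (fun _ a => a - Q.eval a * (Q.derivative.eval a)⁻¹) k
  have hu0 : u 0 = 1 := rfl
  have huS : ∀ k, u (k + 1) = u k - Q.eval (u k) * (Q.derivative.eval (u k))⁻¹ := fun _ => rfl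
  have key : ∀ k, φ (u k) = 1 ∧ (X : PowerSeries ℂ) ^ (2 ^ k) ∣ Q.eval (u k) := by
    intro k
    induction k with
    | zero =>
      refine ⟨by simp [hu0], ?_⟩
      simpa [hu0, PowerSeries.X_dvd_iff] using h0
    | succ k ih =>
      obtain ⟨ha1, had⟩ := ih
      set a := u k
      set d := Q.derivative.eval a with hdd
      have hd : φ d ≠ 0 := hder a ha1
      have hXe : (PowerSeries.X : PowerSeries ℂ) ∣ Q.eval a :=
        dvd_trans (dvd_pow_self PowerSeries.X (Nat.two_pow_pos k).ne') had
      have hφe : φ (Q.eval a) = 0 := PowerSeries.X_dvd_iff.mp hXe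
      set h : PowerSeries ℂ := -(Q.eval a * d⁻¹) with hh
      have hstep : u (k + 1) = a + h := by rw [huS k, hh]; ring
      obtain ⟨c, hc⟩ := Q.binomExpansion a h
      have hdh : d * h = -Q.eval a := by
        rw [hh]
        have : d * -(Q.eval a * d⁻¹) = -(Q.eval a * (d * d⁻¹)) := by ring
        rw [this, PowerSeries.mul_inv_cancel d hd, mul_one]
      have heval : Q.eval (a + h) = c * h ^ 2 := by
        rw [hc, hdh]; ring
      have hdvh : (X : PowerSeries ℂ) ^ (2 ^ k) ∣ h := by
        rw [hh]; exact (had.mul_right _).neg_right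
      constructor
      · rw [hstep, map_add, ha1, hh]
        simp [hφe]
      · rw [hstep, heval]
        have : (X : PowerSeries ℂ) ^ (2 ^ (k + 1)) ∣ h ^ 2 := by
          rw [pow_succ, pow_mul]
          exact pow_dvd_pow_of_dvd hdvh 2
        exact (this.mul_left c)
  -- Cauchy: coefficients stabilize
  have hdiff : ∀ k m, k ≤ m → (X : PowerSeries ℂ) ^ (2 ^ k) ∣ u m - u k := by
    intro k m hkm
    induction m with
    | zero => interval_cases k; simp
    | succ m ihm =>
      rcases Nat.lt_or_ge k (m + 1) with hk | hk
      · have hkm' : k ≤ m := Nat.lt_succ_iff.mp hk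
        have h1' : (X : PowerSeries ℂ) ^ (2 ^ k) ∣ u (m + 1) - u m := by
          rw [huS m]
          have heq : u m - Q.eval (u m) * (Q.derivative.eval (u m))⁻¹ - u m
              = -(Q.eval (u m) * (Q.derivative.eval (u m))⁻¹) := by ring
          rw [heq]
          exact (pow_dvd_pow (X : PowerSeries ℂ)
            (Nat.pow_le_pow_right (by norm_num) hkm')).trans
            ((((key m).2).mul_right _).neg_right)
        have heq2 : u (m + 1) - u k = (u (m + 1) - u m) + (u m - u k) := by ring
        rw [heq2]
        exact dvd_add h1' (ihm hkm')
      · have : k = m + 1 := le_antisymm hkm hk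
        subst this; simp
  have hcoeff : ∀ n k l, n < 2 ^ k → n < 2 ^ l →
      PowerSeries.coeff n (u k) = PowerSeries.coeff n (u l) := by
    have main : ∀ k l, k ≤ l → ∀ n, n < 2 ^ k →
        PowerSeries.coeff n (u k) = PowerSeries.coeff n (u l) := by
      intro k l hkl n hn
      have := (PowerSeries.X_pow_dvd_iff.mp (hdiff k l hkl)) n hn
      rw [map_sub] at this
      exact (sub_eq_zero.mp this).symm
    intro n k l hk hl
    rcases le_total k l with h | h
    · exact main k l h n hk
    · exact (main l k h n hl).symm
  -- the limit
  set U : PowerSeries ℂ := PowerSeries.mk (fun n => PowerSeries.coeff n (u (n + 1))) with hU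
  have hUc : ∀ n k, n < 2 ^ k → PowerSeries.coeff n U = PowerSeries.coeff n (u k) := by
    intro n k hn
    rw [hU, PowerSeries.coeff_mk]
    exact hcoeff n (n + 1) k (lt_of_lt_of_le (Nat.lt_two_pow_self (n := n))
      (Nat.pow_le_pow_right (by norm_num) (Nat.le_succ n))) hn
  have hUd : ∀ k, (X : PowerSeries ℂ) ^ (2 ^ k) ∣ U - u k := by
    intro k
    rw [PowerSeries.X_pow_dvd_iff]
    intro m hm
    rw [map_sub, hUc m k hm, sub_self]
  have hU1 : φ U = 1 := by
    have := hUc 0 0 (by norm_num)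
    rw [hu0] at this
    rw [hφ, ← PowerSeries.coeff_zero_eq_constantCoeff_apply, this]
    simp
  have hUroot : Q.eval U = 0 := by
    ext n
    have hn : n < 2 ^ (n + 1) := lt_of_lt_of_le (Nat.lt_two_pow_self (n := n))
      (Nat.pow_le_pow_right (by norm_num) (Nat.le_succ n))
    have d1 : (X : PowerSeries ℂ) ^ (2 ^ (n + 1)) ∣ Q.eval U - Q.eval (u (n + 1)) :=
      dvd_trans (hUd (n + 1)) (Polynomial.sub_dvd_eval_sub U (u (n + 1)) Q)
    have d2 := (key (n + 1)).2
    have : (X : PowerSeries ℂ) ^ (2 ^ (n + 1)) ∣ Q.eval U := by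
      have := dvd_add d1 d2
      simpa using this
    have := (PowerSeries.X_pow_dvd_iff.mp this) n hn
    simpa using this
  -- uniqueness
  refine ⟨U, ⟨hU1, hUroot⟩, ?_⟩
  rintro v ⟨hv1, hvroot⟩
  set h : PowerSeries ℂ := U - v with hh
  obtain ⟨c, hc⟩ := Q.binomExpansion v h
  have hvh : v + h = U := by rw [hh]; ring
  have hφh : φ h = 0 := by rw [hh, map_sub, hU1, hv1, sub_self]
  have h0' : (Q.derivative.eval v + c * h) * h = 0 := by
    have := hc
    rw [hvh, hUroot, hvroot] at this
    have : Q.derivative.eval v * h + c * h ^ 2 = 0 := by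
      rw [eq_comm] at this
      linear_combination this
    linear_combination this
  have hunit : φ (Q.derivative.eval v + c * h) ≠ 0 := by
    rw [map_add, map_mul, hφh, mul_zero, add_zero]
    exact hder v hv1
  have hne : Q.derivative.eval v + c * h ≠ 0 := fun habs => hunit (by rw [habs, map_zero])
  have := mul_eq_zero.mp h0'
  rcases this with h' | h'
  · exact absurd h' hne
  · rw [hh] at h'
    have : U = v := by linear_combination h'
    exact this.symm ▸ rfl


open HahnSeries in
private lemma laurentVar_inv : (laurentVar⁻¹ : LaurentSeries ℂ) = HahnSeries.single (-1 : ℤ) 1 := by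
  have : (laurentVar : LaurentSeries ℂ) * HahnSeries.single (-1 : ℤ) 1 = 1 := by
    rw [show laurentVar = HahnSeries.single (1:ℤ) (1:ℂ) from rfl, HahnSeries.single_mul_single]
    norm_num [HahnSeries.single_zero_one]
  exact inv_eq_of_mul_eq_one_right this

open HahnSeries in
private lemma term_eq (M : ℤ) (i j e : ℕ) (hij : (i : ℤ) - j = M + e) (a : ℂ)
    (u : PowerSeries ℂ) :
    a • ((HahnSeries.ofPowerSeries ℤ ℂ (PowerSeries.X * u)) ^ i * (laurentVar⁻¹) ^ j)
      = HahnSeries.single M 1 *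
        HahnSeries.ofPowerSeries ℤ ℂ (PowerSeries.C a * PowerSeries.X ^ e * u ^ i) := by
  have h1 : (HahnSeries.ofPowerSeries ℤ ℂ (PowerSeries.X * u)) ^ i
      = single (i : ℤ) 1 * (HahnSeries.ofPowerSeries ℤ ℂ u) ^ i := by
    rw [map_mul, HahnSeries.ofPowerSeries_X, mul_pow, HahnSeries.single_pow]
    simp
  have h2 : ((laurentVar⁻¹ : LaurentSeries ℂ)) ^ j = single (-(j : ℤ)) 1 := by
    rw [laurentVar_inv, HahnSeries.single_pow]
    simp
  have h3 : HahnSeries.ofPowerSeries ℤ ℂ (PowerSeries.C a * PowerSeries.X ^ e * u ^ i)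
      = single (0 : ℤ) a * (single (e : ℤ) 1 * (HahnSeries.ofPowerSeries ℤ ℂ u) ^ i) := by
    rw [map_mul, map_mul, map_pow, map_pow, HahnSeries.ofPowerSeries_C,
      HahnSeries.ofPowerSeries_X, HahnSeries.single_pow, HahnSeries.C_apply, one_pow,
      nsmul_eq_mul, mul_one, mul_assoc]
  rw [h1, h2, h3, ← HahnSeries.single_zero_mul_eq_smul]
  have lhs' : single (0:ℤ) a * (single (i:ℤ) 1 * (HahnSeries.ofPowerSeries ℤ ℂ u) ^ i *
      single (-(j:ℤ)) 1) = (single (0:ℤ) a * single (i:ℤ) 1 * single (-(j:ℤ)) 1) *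
      (HahnSeries.ofPowerSeries ℤ ℂ u) ^ i := by ring
  have rhs' : single (M:ℤ) 1 * (single (0:ℤ) a * (single (e:ℤ) 1 *
      (HahnSeries.ofPowerSeries ℤ ℂ u) ^ i)) = (single (M:ℤ) 1 * single (0:ℤ) a *
      single (e:ℤ) 1) * (HahnSeries.ofPowerSeries ℤ ℂ u) ^ i := by ring
  rw [lhs', rhs', HahnSeries.single_mul_single, HahnSeries.single_mul_single,
    HahnSeries.single_mul_single, HahnSeries.single_mul_single]
  have hexp : (i:ℤ) + -(j:ℤ) = M + (e:ℤ) := by omega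
  simp [hexp]

end

/-- If `∑_{i : (i,i-M(P)) ∈ S(P)} α_{i,i-M(P)} = 0` and
`∑_{i : (i,i-M(P)) ∈ S(P)} i·α_{i,i-M(P)} ≠ 0`, where `M(P) = min_{(i,j) ∈ S(P)} (i-j)`,
then `P` has exactly one probability branch at `∞`. -/
theorem existsUnique_probabilityBranch
    (α : (ℕ × ℕ) →₀ ℂ) (hα : α ≠ 0)
    (hsum : ∑ p ∈ α.support.filter (fun p : ℕ × ℕ => (p.1 : ℤ) - (p.2 : ℤ) =
        (α.support.image (fun q : ℕ × ℕ => (q.1 : ℤ) - (q.2 : ℤ))).min'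
          ((Finsupp.support_nonempty_iff.mpr hα).image _)), α p = 0)
    (hsum' : ∑ p ∈ α.support.filter (fun p : ℕ × ℕ => (p.1 : ℤ) - (p.2 : ℤ) =
        (α.support.image (fun q : ℕ × ℕ => (q.1 : ℤ) - (q.2 : ℤ))).min'
          ((Finsupp.support_nonempty_iff.mpr hα).image _)), (p.1 : ℂ) * α p ≠ 0) :
    ∃! f : PowerSeries ℂ, IsProbabilityBranch α f := by
  classical
  set M : ℤ := (α.support.image (fun q : ℕ × ℕ => (q.1 : ℤ) - (q.2 : ℤ))).min'
      ((Finsupp.support_nonempty_iff.mpr hα).image _) with hM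
  have hMle : ∀ p ∈ α.support, M ≤ (p.1 : ℤ) - p.2 := fun p hp =>
    Finset.min'_le _ _ (Finset.mem_image_of_mem _ hp)
  set e : ℕ × ℕ → ℕ := fun p => ((p.1 : ℤ) - p.2 - M).toNat with he
  have hij : ∀ p ∈ α.support, (p.1 : ℤ) - p.2 = M + e p := by
    intro p hp
    have h1 := hMle p hp
    have h2 : ((e p : ℤ)) = (p.1 : ℤ) - p.2 - M := Int.toNat_of_nonneg (by omega)
    omega
  have hefilter : ∀ p ∈ α.support, (e p = 0 ↔ (p.1 : ℤ) - (p.2 : ℤ) = M) := by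
    intro p hp
    have h1 := hMle p hp
    rw [he]
    simp only [Int.toNat_eq_zero]
    omega
  set Q : Polynomial (PowerSeries ℂ) :=
    ∑ p ∈ α.support, Polynomial.C (PowerSeries.C (α p) * PowerSeries.X ^ e p) *
      Polynomial.X ^ p.1 with hQ
  have hQeval : ∀ u : PowerSeries ℂ, Q.eval u =
      ∑ p ∈ α.support, PowerSeries.C (α p) * PowerSeries.X ^ e p * u ^ p.1 := by
    intro u
    rw [hQ, Polynomial.eval_finset_sum]
    exact Finset.sum_congr rfl fun p hp => by simp
  have hfilter_eq : α.support.filter (fun p => e p = 0) = α.support.filter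
      (fun p : ℕ × ℕ => (p.1 : ℤ) - (p.2 : ℤ) = M) := Finset.filter_congr hefilter
  have hφ0 : ∀ n : ℕ, PowerSeries.constantCoeff (PowerSeries.X ^ n : PowerSeries ℂ)
      = if n = 0 then 1 else 0 := by
    intro n; cases n <;> simp [pow_succ]
  have hQ1 : PowerSeries.constantCoeff (Q.eval 1) = 0 := by
    rw [hQeval 1, map_sum]
    have hterm : ∀ p ∈ α.support, PowerSeries.constantCoeff
        (PowerSeries.C (α p) * PowerSeries.X ^ e p * 1 ^ p.1)
        = if e p = 0 then α p else 0 := by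
      intro p hp
      rw [one_pow, mul_one, map_mul, PowerSeries.constantCoeff_C, hφ0]
      split <;> simp
    rw [Finset.sum_congr rfl hterm, ← Finset.sum_filter, hfilter_eq]
    exact hsum
  have hQd : Q.derivative.eval 1 = ∑ p ∈ α.support,
      PowerSeries.C (α p) * PowerSeries.X ^ e p * (p.1 : PowerSeries ℂ) := by
    rw [hQ, map_sum, Polynomial.eval_finset_sum]
    refine Finset.sum_congr rfl fun p hp => ?_
    rw [Polynomial.derivative_C_mul_X_pow]
    simp
  have hQ2 : PowerSeries.constantCoeff (Q.derivative.eval 1) ≠ 0 := by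
    rw [hQd, map_sum]
    have hterm : ∀ p ∈ α.support, PowerSeries.constantCoeff
        (PowerSeries.C (α p) * PowerSeries.X ^ e p * (p.1 : PowerSeries ℂ))
        = if e p = 0 then (p.1 : ℂ) * α p else 0 := by
      intro p hp
      rw [map_mul, map_mul, PowerSeries.constantCoeff_C, hφ0, map_natCast]
      split
      · ring
      · ring
    rw [Finset.sum_congr rfl hterm, ← Finset.sum_filter, hfilter_eq]
    exact hsum'
  obtain ⟨u₀, ⟨hu01, hu02⟩, huniq⟩ := hensel Q hQ1 hQ2
  have hkey : ∀ u : PowerSeries ℂ,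
      (∑ p ∈ α.support, α p • ((HahnSeries.ofPowerSeries ℤ ℂ (PowerSeries.X * u)) ^ p.1 *
        (laurentVar⁻¹) ^ p.2))
      = HahnSeries.single M 1 * HahnSeries.ofPowerSeries ℤ ℂ (Q.eval u) := by
    intro u
    rw [hQeval u, map_sum, Finset.mul_sum]
    exact Finset.sum_congr rfl fun p hp => term_eq M p.1 p.2 (e p) (hij p hp) (α p) u
  have hzero : ∀ u : PowerSeries ℂ,
      (∑ p ∈ α.support, α p • ((HahnSeries.ofPowerSeries ℤ ℂ (PowerSeries.X * u)) ^ p.1 *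
        (laurentVar⁻¹) ^ p.2)) = 0 ↔ Q.eval u = 0 := by
    intro u
    rw [hkey u, mul_eq_zero]
    constructor
    · rintro (h | h)
      · exact absurd h (HahnSeries.single_ne_zero one_ne_zero)
      · exact HahnSeries.ofPowerSeries_injective (by rw [h, map_zero])
    · intro h; right; rw [h, map_zero]
  refine ⟨PowerSeries.X * u₀, ⟨?_, ?_, ?_⟩, ?_⟩
  · rw [PowerSeries.coeff_zero_eq_constantCoeff_apply, map_mul]
    simp
  · rw [show (1 : ℕ) = 0 + 1 from rfl, PowerSeries.coeff_succ_X_mul,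
      PowerSeries.coeff_zero_eq_constantCoeff_apply]
    exact hu01
  · exact (hzero u₀).mpr hu02
  · rintro f ⟨hf0, hf1, hfsum⟩
    rw [PowerSeries.coeff_zero_eq_constantCoeff_apply] at hf0
    obtain ⟨u, rfl⟩ := PowerSeries.X_dvd_iff.mpr hf0
    have hu1 : PowerSeries.constantCoeff u = 1 := by
      rw [show (1 : ℕ) = 0 + 1 from rfl, PowerSeries.coeff_succ_X_mul,
        PowerSeries.coeff_zero_eq_constantCoeff_apply] at hf1
      exact hf1
    have hroot : Q.eval u = 0 := (hzero u).mp hfsum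
    rw [huniq u ⟨hu1, hroot⟩]
end

section
/- Let Q_1, …, Q_k ∈ ℂ[z] with deg Q_i ≤ i for all i, and write a_{i,i} for the coefficient of z^i in Q_i. Suppose p ∈ ℂ[z] has degree exactly n and satisfies the homogenized spectral problem Q_k p^{(k)} + λ Q_{k−1} p^{(k−1)} + ⋯ + λ^{k−1} Q_1 p′ = λ^k p for some λ ∈ ℂ. Then λ satisfies a_{k,k}·n(n−1)⋯(n−k+1) + λ·a_{k−1,k−1}·n(n−1)⋯(n−k+2) + ⋯ + λ^{k−1}·n·a_{1,1} = λ^k, where n(n−1)⋯(n−i+1) denotes the descending factorial (equal to 0 when i > n). -/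
open Polynomial Finset

/-- If `p` of degree exactly `n` satisfies the homogenized spectral
problem `∑_{i=1}^k λ^{k-i} Q_i p^{(i)} = λ^k p` with `deg Q_i ≤ i`, then writing
`a_{i,i}` for the coefficient of `z^i` in `Q_i`, the eigenvalue `λ` satisfies
`∑_{i=1}^k λ^{k-i} · a_{i,i} · n(n-1)⋯(n-i+1) = λ^k`. -/
theorem eigenvalue_equation
    (k : ℕ) (hk : 1 ≤ k) (Q : ℕ → Polynomial ℂ)
    (hdeg : ∀ i, 1 ≤ i → i ≤ k → (Q i).natDegree ≤ i)
    (n : ℕ) (p : Polynomial ℂ) (hp : p ≠ 0) (hpn : p.natDegree = n)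
    (l : ℂ)
    (heq : ∑ i ∈ Finset.Icc 1 k, (l ^ (k - i)) • (Q i * Polynomial.derivative^[i] p)
      = (l ^ k) • p) :
    ∑ i ∈ Finset.Icc 1 k, l ^ (k - i) * (Q i).coeff i * (n.descFactorial i : ℂ)
      = l ^ k := by
  have hc : p.coeff n ≠ 0 := by
    rw [← hpn]; exact Polynomial.leadingCoeff_ne_zero.mpr hp
  have key : ∀ i ∈ Finset.Icc 1 k,
      (Q i * Polynomial.derivative^[i] p).coeff n
        = (Q i).coeff i * (n.descFactorial i : ℂ) * p.coeff n := by
    intro i hi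
    rw [Finset.mem_Icc] at hi
    rcases le_or_gt i n with h | h
    · have h1 : (Q i).natDegree ≤ i := hdeg i hi.1 hi.2
      have h2 : (Polynomial.derivative^[i] p).natDegree ≤ n - i := by
        calc (Polynomial.derivative^[i] p).natDegree ≤ p.natDegree - i :=
              p.natDegree_iterate_derivative i
          _ = n - i := by rw [hpn]
      have hni : i + (n - i) = n := Nat.add_sub_cancel' h
      calc (Q i * Polynomial.derivative^[i] p).coeff n
          = (Q i * Polynomial.derivative^[i] p).coeff (i + (n - i)) := by rw [hni]
        _ = (Q i).coeff i * (Polynomial.derivative^[i] p).coeff (n - i) :=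
            Polynomial.coeff_mul_add_eq_of_natDegree_le h1 h2
        _ = (Q i).coeff i * ((n - i + i).descFactorial i • p.coeff (n - i + i)) := by
            rw [Polynomial.coeff_iterate_derivative]
        _ = (Q i).coeff i * (n.descFactorial i : ℂ) * p.coeff n := by
            rw [Nat.sub_add_cancel h, nsmul_eq_mul, mul_assoc]
    · have hz : Polynomial.derivative^[i] p = 0 :=
        Polynomial.iterate_derivative_eq_zero (by rw [hpn]; exact h)
      have hd : n.descFactorial i = 0 := Nat.descFactorial_eq_zero_iff_lt.mpr h
      rw [hz, hd, mul_zero, Polynomial.coeff_zero, Nat.cast_zero, mul_zero, zero_mul]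
  have hcoeff := congrArg (fun q => Polynomial.coeff q n) heq
  simp only [Polynomial.finset_sum_coeff, Polynomial.coeff_smul, smul_eq_mul] at hcoeff
  rw [Finset.sum_congr rfl (fun i hi => by rw [key i hi])] at hcoeff
  apply mul_right_cancel₀ hc
  rw [Finset.sum_mul]
  convert hcoeff using 2 with i hi
  ring
end

section
/- Let P, Q, R ∈ ℂ[z] with P ≠ 0, P and Q coprime, and D := Q² − 4PR not identically zero. Suppose μ is a real signed Borel measure on ℂ with compact support such that for Lebesgue-a.e. z ∈ ℂ the Cauchy transform satisfies P(z)·𝒞_μ(z)² + Q(z)·𝒞_μ(z) + R(z) = 0. Then every root of D of odd multiplicity belongs to the support of μ. -/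
open MeasureTheory Polynomial

/-- The Cauchy transform of a real signed measure `μ` on `ℂ`, defined via the Jordan
decomposition `μ = μ⁺ - μ⁻`. -/
noncomputable def cauchyTransform (μ : SignedMeasure ℂ) (z : ℂ) : ℂ :=
  (∫ ξ, (z - ξ)⁻¹ ∂μ.toJordanDecomposition.posPart) -
    (∫ ξ, (z - ξ)⁻¹ ∂μ.toJordanDecomposition.negPart)

open Metric in
lemma cauchy_diffOn (ν : Measure ℂ) [IsFiniteMeasure ν] (z₁ : ℂ) (r : ℝ)
    (hr : 0 < r) (h0 : ν (ball z₁ r) = 0) :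
    DifferentiableOn ℂ (fun z => ∫ ξ, (z - ξ)⁻¹ ∂ν) (ball z₁ (r / 2)) := by
  have hae : ∀ᵐ ξ ∂ν, ξ ∉ ball z₁ r := measure_eq_zero_iff_ae_notMem.1 h0
  have key : ∀ a : ℂ, a ∉ ball z₁ r → ∀ x ∈ ball z₁ (r / 2), r / 2 ≤ ‖x - a‖ := by
    intro a ha x hx
    rw [mem_ball, not_lt] at ha
    rw [mem_ball] at hx
    rw [← dist_eq_norm]
    have h1 := dist_triangle a x z₁
    rw [dist_comm a x] at h1
    linarith
  intro z hz
  have hzin : z ∈ ball z₁ (r / 2) := hz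
  have hεpos : 0 < r / 2 - dist z z₁ := by
    have := mem_ball.1 hzin; linarith
  have hsub : ball z (r / 2 - dist z z₁) ⊆ ball z₁ (r / 2) := by
    intro x hx
    rw [mem_ball] at hx ⊢
    have := dist_triangle x z z₁
    linarith
  have hmeas : ∀ x : ℂ, AEStronglyMeasurable (fun a : ℂ => (x - a)⁻¹) ν :=
    fun x => ((measurable_const.sub measurable_id).inv).aestronglyMeasurable
  have hmeas' : AEStronglyMeasurable (fun a : ℂ => -(((z - a) ^ 2)⁻¹)) ν := by
    exact ((((measurable_const.sub measurable_id).pow_const 2).inv).neg).aestronglyMeasurable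
  have hint : Integrable (fun a : ℂ => (z - a)⁻¹) ν := by
    refine Integrable.mono' (integrable_const ((r / 2)⁻¹)) (hmeas z) ?_
    filter_upwards [hae] with a ha
    have h2 := key a ha z hzin
    rw [norm_inv]
    exact inv_anti₀ (by positivity) h2
  have hderiv := hasDerivAt_integral_of_dominated_loc_of_deriv_le (μ := ν)
    (F := fun (x : ℂ) (a : ℂ) => (x - a)⁻¹) (F' := fun (x : ℂ) (a : ℂ) => -(((x - a) ^ 2)⁻¹))
    (bound := fun _ => ((r / 2) ^ 2)⁻¹) (Metric.ball_mem_nhds z hεpos)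
    (Filter.Eventually.of_forall fun x => hmeas x) hint hmeas'
    ?_ (integrable_const _) ?_
  · exact (hderiv.2.differentiableAt).differentiableWithinAt
  · filter_upwards [hae] with a ha x hx
    have h2 := key a ha x (hsub hx)
    rw [norm_neg, norm_inv, norm_pow]
    refine inv_anti₀ (by positivity) ?_
    exact pow_le_pow_left₀ (by positivity) h2 2
  · filter_upwards [hae] with a ha x hx
    have h2 := key a ha x (hsub hx)
    have hne : x - a ≠ 0 := by
      intro h; rw [h, norm_zero] at h2; linarith
    have := ((hasDerivAt_id x).sub_const a).inv hne
    simpa [neg_div, one_div, Pi.inv_def] using this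

lemma poly_analyticAt (p : Polynomial ℂ) (x : ℂ) : AnalyticAt ℂ (fun z => p.eval z) x := by
  have := (analyticAt_id : AnalyticAt ℂ id x).aeval_polynomial p
  simpa [Polynomial.aeval_def] using this

/-- Let `P, Q, R` be polynomials with `P ≠ 0`, `P, Q` coprime and
discriminant `D = Q² - 4PR` not identically zero. If the Cauchy transform of a compactly
supported real signed measure `μ` satisfies `P 𝒞² + Q 𝒞 + R = 0` a.e. in `ℂ`, then every
root of `D` of odd multiplicity (i.e. every branching point of the algebraic function)
lies in the support of `μ`: every open neighborhood of such a root has nonzero total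
variation. -/
theorem branch_points_in_support
    (P Q R : Polynomial ℂ) (hP : P ≠ 0) (hcop : IsCoprime P Q)
    (hD : Q ^ 2 - 4 * P * R ≠ 0)
    (μ : SignedMeasure ℂ)
    (hsupp : ∃ K : Set ℂ, IsCompact K ∧ μ.totalVariation Kᶜ = 0)
    (hae : ∀ᵐ z : ℂ ∂volume,
      P.eval z * (cauchyTransform μ z) ^ 2 + Q.eval z * cauchyTransform μ z + R.eval z = 0) :
    ∀ z₀ : ℂ, Odd ((Q ^ 2 - 4 * P * R).rootMultiplicity z₀) →
      ∀ U : Set ℂ, IsOpen U → z₀ ∈ U → μ.totalVariation U ≠ 0 := by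
  intro z₀ hodd U hU hz₀U htv
  set D : Polynomial ℂ := Q ^ 2 - 4 * P * R with hDdef
  set n : ℕ := D.rootMultiplicity z₀ with hn
  -- positive and negative parts vanish on U
  have htv' : μ.toJordanDecomposition.posPart U + μ.toJordanDecomposition.negPart U = 0 := by
    rw [SignedMeasure.totalVariation] at htv
    simpa [Measure.add_apply] using htv
  have hpos : μ.toJordanDecomposition.posPart U = 0 := by
    exact (add_eq_zero.mp htv').1
  have hneg : μ.toJordanDecomposition.negPart U = 0 := by
    exact (add_eq_zero.mp htv').2
  -- a ball around z₀ inside U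
  obtain ⟨r, hr, hball⟩ := Metric.isOpen_iff.1 hU z₀ hz₀U
  set B : Set ℂ := Metric.ball z₀ (r / 2) with hBdef
  have hBz₀ : z₀ ∈ B := Metric.mem_ball_self (by linarith)
  have hBnhds : B ∈ nhds z₀ := Metric.ball_mem_nhds z₀ (by linarith)
  -- Cauchy transform is differentiable (hence analytic) on B
  have hdiff : DifferentiableOn ℂ (cauchyTransform μ) B := by
    have h1 := cauchy_diffOn μ.toJordanDecomposition.posPart z₀ r hr
      (measure_mono_null hball hpos)
    have h2 := cauchy_diffOn μ.toJordanDecomposition.negPart z₀ r hr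
      (measure_mono_null hball hneg)
    exact h1.sub h2
  set C : ℂ → ℂ := cauchyTransform μ with hCdef
  have hCan : AnalyticAt ℂ C z₀ := hdiff.analyticAt hBnhds
  have hCcont : ContinuousOn C B := hdiff.continuousOn
  -- the algebraic relation holds everywhere on B
  set F : ℂ → ℂ := fun z => P.eval z * C z ^ 2 + Q.eval z * C z + R.eval z with hFdef
  have hFc : ContinuousOn F B := by
    apply ContinuousOn.add
    apply ContinuousOn.add
    · exact ((P.continuous.continuousOn).mul ((hCcont.pow 2)))
    · exact ((Q.continuous.continuousOn).mul hCcont)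
    · exact R.continuous.continuousOn
  have hzero : ∀ z ∈ B, F z = 0 := by
    intro w hw
    by_contra hne
    have hVopen : IsOpen (B ∩ F ⁻¹' ({0}ᶜ)) :=
      hFc.isOpen_inter_preimage Metric.isOpen_ball isOpen_compl_singleton
    have hVne : (B ∩ F ⁻¹' ({0}ᶜ)).Nonempty := ⟨w, hw, hne⟩
    have hVpos : 0 < volume (B ∩ F ⁻¹' ({0}ᶜ)) := hVopen.measure_pos volume hVne
    have hnull : volume {z : ℂ | ¬ (P.eval z * (cauchyTransform μ z) ^ 2 +
        Q.eval z * cauchyTransform μ z + R.eval z = 0)} = 0 := hae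
    have hsub2 : (B ∩ F ⁻¹' ({0}ᶜ)) ⊆ {z : ℂ | ¬ (P.eval z * (cauchyTransform μ z) ^ 2 +
        Q.eval z * cauchyTransform μ z + R.eval z = 0)} := by
      rintro x ⟨-, hx2⟩
      exact hx2
    exact absurd (measure_mono_null hsub2 hnull) hVpos.ne'
  -- g² = D on B
  set g : ℂ → ℂ := fun z => 2 * P.eval z * C z + Q.eval z with hgdef
  have hgan : AnalyticAt ℂ g z₀ := by
    exact ((analyticAt_const.mul (poly_analyticAt P z₀)).mul hCan).add (poly_analyticAt Q z₀)
  have hsq : ∀ z ∈ B, g z * g z = D.eval z := by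
    intro z hz
    have h0 := hzero z hz
    simp only [hgdef, hDdef, Polynomial.eval_sub, Polynomial.eval_mul, Polynomial.eval_pow,
      Polynomial.eval_ofNat]
    linear_combination (4 * P.eval z) * h0
  have hev : ∀ᶠ z in nhds z₀, g z * g z = D.eval z :=
    Filter.eventually_of_mem hBnhds hsq
  -- order of D at z₀ equals n
  have hDan : AnalyticAt ℂ (fun z => D.eval z) z₀ := poly_analyticAt D z₀
  obtain ⟨E, hfac, hndvd⟩ := D.exists_eq_pow_rootMultiplicity_mul_and_not_dvd hD z₀
  have hE0 : E.eval z₀ ≠ 0 := by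
    intro h
    exact hndvd ((Polynomial.dvd_iff_isRoot).2 h)
  have hordD : analyticOrderAt (fun z => D.eval z) z₀ = (n : ℕ∞) := by
    rw [hDan.analyticOrderAt_eq_natCast]
    refine ⟨fun z => E.eval z, poly_analyticAt E z₀, hE0, Filter.Eventually.of_forall fun z => ?_⟩
    rw [smul_eq_mul]
    conv_lhs => rw [hfac]
    simp [hn]
  -- g is not eventually zero at z₀
  have hgne : analyticOrderAt g z₀ ≠ ⊤ := by
    intro htop
    have hgz : ∀ᶠ z in nhds z₀, g z = 0 := analyticOrderAt_eq_top.1 htop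
    have hDz : ∀ᶠ z in nhds z₀, D.eval z = 0 := by
      filter_upwards [hgz, hev] with z h1 h2
      rw [← h2, h1, mul_zero]
    have : analyticOrderAt (fun z => D.eval z) z₀ = ⊤ := analyticOrderAt_eq_top.2 hDz
    rw [hordD] at this
    exact (ENat.coe_ne_top n) this
  obtain ⟨m, hm⟩ := WithTop.ne_top_iff_exists.1 hgne
  obtain ⟨h, hhan, hh0, hevg⟩ := (hgan.analyticOrderAt_eq_natCast (n := m)).1 hm.symm
  have hordD2 : analyticOrderAt (fun z => D.eval z) z₀ = ((2 * m : ℕ) : ℕ∞) := by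
    rw [hDan.analyticOrderAt_eq_natCast]
    refine ⟨fun z => h z * h z, hhan.mul hhan, mul_ne_zero hh0 hh0, ?_⟩
    filter_upwards [hev, hevg] with z h1 h2
    rw [← h1, h2, smul_eq_mul, smul_eq_mul, two_mul, pow_add]
    ring
  rw [hordD] at hordD2
  have : n = 2 * m := by exact_mod_cast hordD2

  rw [this] at hodd
  exact (Nat.not_odd_iff_even.2 ⟨m, two_mul m⟩) hodd
end

section
/- Let P, Q, R ∈ ℂ[z] with P and Q coprime, let z₀ be a simple zero of P, and set D := Q² − 4PR (so D(z₀) = Q(z₀)² ≠ 0). Let U be an open neighborhood of z₀ containing no other zero of P, and let g be an analytic function on U with g(z)² = D(z) for all z ∈ U and g(z₀) = Q(z₀). Then: (a) the solution branch 𝒞₁(z) = (−Q(z) + g(z))/(2P(z)) extends analytically across z₀ (i.e. has a removable singularity at z₀); and (b) the solution branch 𝒞₂(z) = (−Q(z) − g(z))/(2P(z)) has a simple pole at z₀ with residue −Q(z₀)/P′(z₀), which equals the residue of the rational function −Q/P at z₀. -/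
open Polynomial Filter

/-- Let `P, Q` be coprime, `z₀` a simple zero of `P`, and
`g` an analytic square root of the discriminant `D = Q² - 4PR` on a neighborhood `U` of
`z₀` containing no other zero of `P`, normalized by `g z₀ = Q z₀`. Then the branch
`𝒞₁ = (-Q + g)/(2P)` extends analytically across `z₀`, while the branch
`𝒞₂ = (-Q - g)/(2P)` has a simple pole at `z₀` with residue `-Q(z₀)/P'(z₀)`, which is
also the residue of `-Q/P` at `z₀`. -/
theorem branch_behavior_at_simple_pole
    (P Q R : Polynomial ℂ) (hcop : IsCoprime P Q)
    (z₀ : ℂ) (hz₀ : P.eval z₀ = 0) (hz₀' : P.derivative.eval z₀ ≠ 0)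
    (U : Set ℂ) (hU : IsOpen U) (hz₀U : z₀ ∈ U)
    (hPU : ∀ z ∈ U, P.eval z = 0 → z = z₀)
    (g : ℂ → ℂ) (hg : AnalyticOnNhd ℂ g U)
    (hg2 : ∀ z ∈ U, (g z) ^ 2 = (Q ^ 2 - 4 * P * R).eval z)
    (hgz₀ : g z₀ = Q.eval z₀) :
    (∃ h : ℂ → ℂ, AnalyticOnNhd ℂ h U ∧
      ∀ z ∈ U, z ≠ z₀ → h z = (-Q.eval z + g z) / (2 * P.eval z)) ∧
    (Tendsto (fun z : ℂ => (z - z₀) * ((-Q.eval z - g z) / (2 * P.eval z)))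
        (nhdsWithin z₀ {z₀}ᶜ) (nhds (-Q.eval z₀ / P.derivative.eval z₀)) ∧
      -Q.eval z₀ / P.derivative.eval z₀ ≠ 0 ∧
      Tendsto (fun z : ℂ => (z - z₀) * (-Q.eval z / P.eval z))
        (nhdsWithin z₀ {z₀}ᶜ) (nhds (-Q.eval z₀ / P.derivative.eval z₀))) := by
  -- analyticity of polynomial evaluation
  have hpa : ∀ (p : Polynomial ℂ) (z : ℂ), AnalyticAt ℂ (fun w => p.eval w) z := fun p z => by
    simpa [Polynomial.coe_aeval_eq_eval] using
      (analyticAt_id : AnalyticAt ℂ _ z).aeval_polynomial p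
  -- Q(z₀) ≠ 0
  have hQz₀ : Q.eval z₀ ≠ 0 := by
    have := hcop.map (evalRingHom z₀)
    simp only [coe_evalRingHom, hz₀] at this
    exact (isCoprime_zero_left.mp this).ne_zero
  -- P nonzero on U \ {z₀}
  have hPne : ∀ z ∈ U, z ≠ z₀ → P.eval z ≠ 0 := fun z hz hne h0 => hne (hPU z hz h0)
  -- the slope limit
  have hP' : Tendsto (fun z => P.eval z / (z - z₀)) (nhdsWithin z₀ {z₀}ᶜ)
      (nhds (P.derivative.eval z₀)) := by
    have hd := P.hasDerivAt z₀
    rw [hasDerivAt_iff_tendsto_slope] at hd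
    refine hd.congr fun z => ?_
    simp [slope, hz₀, div_eq_inv_mul]
  have hinv : Tendsto (fun z => (z - z₀) / P.eval z) (nhdsWithin z₀ {z₀}ᶜ)
      (nhds (P.derivative.eval z₀)⁻¹) := by
    have := hP'.inv₀ hz₀'
    refine this.congr fun z => ?_
    rw [inv_div]
  -- continuity of -Q - g at z₀ within the punctured filter
  have hgc : Tendsto g (nhdsWithin z₀ {z₀}ᶜ) (nhds (g z₀)) :=
    ((hg z₀ hz₀U).continuousAt.tendsto).mono_left nhdsWithin_le_nhds
  have hQc : ∀ p : Polynomial ℂ, Tendsto (fun z => p.eval z) (nhdsWithin z₀ {z₀}ᶜ)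
      (nhds (p.eval z₀)) := fun p =>
    ((hpa p z₀).continuousAt.tendsto).mono_left nhdsWithin_le_nhds
  constructor
  · -- Part (a): removable singularity
    set φ : ℂ → ℂ := fun z => 2 * R.eval z / (-Q.eval z - g z) with hφ
    refine ⟨fun z => if z = z₀ then φ z₀ else (-Q.eval z + g z) / (2 * P.eval z), ?_, ?_⟩
    · intro z hz
      by_cases hzz : z = z₀
      · subst hzz
        have hden : -Q.eval z + -(g z) ≠ 0 := by
          rw [hgz₀]; ring_nf
          simpa using hQz₀
        have hφA : AnalyticAt ℂ φ z :=
          ((analyticAt_const.mul (hpa R z)).div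
            (((hpa Q z).neg).sub (hg z hz)) (by simpa [sub_eq_add_neg] using hden))
        refine hφA.congr ?_
        have h1 : ∀ᶠ w in nhds z, w ∈ U := hU.mem_nhds hz
        have h2 : ∀ᶠ w in nhds z, -Q.eval w - g w ≠ 0 := by
          have : ContinuousAt (fun w => -Q.eval w - g w) z :=
            (((hpa Q z).neg).sub (hg z hz)).continuousAt
          exact this.eventually_ne (by simpa [sub_eq_add_neg] using hden)
        filter_upwards [h1, h2] with w hwU hwne
        by_cases hw : w = z
        · simp [hw]
        · rw [if_neg hw, hφ]
          have hPw : P.eval w ≠ 0 := hPne w hwU hw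
          rw [div_eq_div_iff hwne (by simpa using (mul_ne_zero two_ne_zero hPw))]
          have := hg2 w hwU
          simp only [eval_sub, eval_pow, eval_mul, eval_ofNat] at this
          linear_combination this
      · have hPz : P.eval z ≠ 0 := hPne z hz hzz
        have hA : AnalyticAt ℂ (fun w => (-Q.eval w + g w) / (2 * P.eval w)) z :=
          (((hpa Q z).neg).add (hg z hz)).div
            (analyticAt_const.mul (hpa P z)) (by simpa using hPz)
        refine hA.congr ?_
        have : ∀ᶠ w in nhds z, w ≠ z₀ := isOpen_ne.mem_nhds hzz
        filter_upwards [this] with w hw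
        simp [hw]
    · intro z _ hne
      simp [hne]
  · -- Part (b)
    have hval : (P.derivative.eval z₀)⁻¹ * ((-Q.eval z₀ - g z₀) / 2)
        = -Q.eval z₀ / P.derivative.eval z₀ := by
      rw [hgz₀]; field_simp; ring
    refine ⟨?_, ?_, ?_⟩
    · have hprod := hinv.mul (((hQc Q).neg.sub hgc).div_const 2)
      rw [hval] at hprod
      refine hprod.congr fun z => ?_
      field_simp
    · exact div_ne_zero (neg_ne_zero.mpr hQz₀) hz₀'
    · have hprod := hinv.mul (hQc Q).neg
      have hval2 : (P.derivative.eval z₀)⁻¹ * (-Q.eval z₀)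
          = -Q.eval z₀ / P.derivative.eval z₀ := by field_simp
      rw [hval2] at hprod
      refine hprod.congr fun z => ?_
      rw [div_mul_eq_mul_div, mul_div_assoc]
end
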